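/- Let A ∈ ℚ^{m×n} have full column rank and let b ∈ ℝ^m be such that P_b := {x : A x ≤ b} is nonempty and has finite lattice width. Then there exist bases N₁ and N₂ of A such that, with C₁ := {y A_{N₁} : y ≥ 0} and C₂ := {−y A_{N₂} : y ≥ 0}, the lattice width of P_b equals w(P_b) = min{ c (F_{N₁} − F_{N₂}) b : c ∈ C₁ ∩ C₂ ∩ ℤⁿ, c ≠ 0 }, and for every c ∈ C₁ ∩ C₂ one has max{c·x : x ∈ P_b} = c F_{N₁} b and min{c·x : x ∈ P_b} = c F_{N₂} b. -/

import Mathlib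

open Matrix Set

noncomputable def widthAlong {n : ℕ} (K : Set (Fin n → ℝ)) (c : Fin n → ℝ) : EReal :=
  sSup ((fun x => ((∑ i, c i * x i : ℝ) : EReal)) '' K) -
    sInf ((fun x => ((∑ i, c i * x i : ℝ) : EReal)) '' K)

noncomputable def latticeWidth {n : ℕ} (K : Set (Fin n → ℝ)) : EReal :=
  sInf {w : EReal | ∃ c : Fin n → ℤ, c ≠ 0 ∧ w = widthAlong K (fun i => (c i : ℝ))}

def Pb {m n : ℕ} (A : Matrix (Fin m) (Fin n) ℚ) (b : Fin m → ℝ) : Set (Fin n → ℝ) :=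
  {x | ∀ i, (∑ j, (A i j : ℝ) * x j) ≤ b i}

def IsBasisOf {m n : ℕ} (A : Matrix (Fin m) (Fin n) ℚ) (N : Fin n → Fin m) : Prop :=
  Function.Injective N ∧ IsUnit (A.submatrix N id).det

noncomputable def FN {m n : ℕ} (A : Matrix (Fin m) (Fin n) ℚ) (N : Fin n → Fin m)
    (b : Fin m → ℝ) : Fin n → ℝ :=
  (((A.submatrix N id).map ((↑) : ℚ → ℝ))⁻¹).mulVec (fun i => b (N i))

def posCone {m n : ℕ} (A : Matrix (Fin m) (Fin n) ℚ) (N : Fin n → Fin m) :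
    Set (Fin n → ℝ) :=
  {c | ∃ y : Fin n → ℝ, (∀ i, 0 ≤ y i) ∧ ∀ j, c j = ∑ i, y i * (A (N i) j : ℝ)}

def negCone {m n : ℕ} (A : Matrix (Fin m) (Fin n) ℚ) (N : Fin n → Fin m) :
    Set (Fin n → ℝ) :=
  {c | ∃ y : Fin n → ℝ, (∀ i, 0 ≤ y i) ∧ ∀ j, c j = -∑ i, y i * (A (N i) j : ℝ)}

namespace LWB


variable {n : ℕ}

lemma dot_self_pos {c : Fin n → ℝ} (hc : c ≠ 0) : 0 < c ⬝ᵥ c := by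
  have h0 : (0:ℝ) ≤ c ⬝ᵥ c := Finset.sum_nonneg fun i _ => mul_self_nonneg _
  rcases h0.lt_or_eq with h | h
  · exact h
  · exfalso; apply hc; funext i
    have := (Finset.sum_eq_zero_iff_of_nonneg
      (fun i _ => mul_self_nonneg (c i))).mp h.symm i (Finset.mem_univ i)
    exact mul_self_eq_zero.mp this

/-- Farkas' lemma, algebraic form. -/
theorem farkas {ι : Type*} [DecidableEq ι] (s : Finset ι) :
    ∀ (v : ι → Fin n → ℝ) (c : Fin n → ℝ),
    (¬ ∃ y : ι → ℝ, (∀ i, 0 ≤ y i) ∧ c = ∑ i ∈ s, y i • v i) →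
    ∃ d : Fin n → ℝ, (∀ i ∈ s, v i ⬝ᵥ d ≤ 0) ∧ 0 < c ⬝ᵥ d := by
  induction s using Finset.induction_on with
  | empty =>
    intro v c h
    refine ⟨c, by simp, dot_self_pos ?_⟩
    rintro rfl
    exact h ⟨0, fun i => le_rfl, by simp⟩
  | @insert a s' ha ih =>
    intro v c h
    have h' : ¬ ∃ y : ι → ℝ, (∀ i, 0 ≤ y i) ∧ c = ∑ i ∈ s', y i • v i := by
      rintro ⟨y, hy, rfl⟩
      refine h ⟨Function.update y a 0, ?_, ?_⟩
      · intro i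
        rcases eq_or_ne i a with rfl | hne
        · simp
        · simp [Function.update_of_ne hne, hy i]
      · rw [Finset.sum_insert ha]
        simp only [Function.update_self, zero_smul, zero_add]
        refine (Finset.sum_congr rfl fun i hi => ?_)
        rw [Function.update_of_ne (fun hia => ha (by rw [← hia]; exact hi))]
    obtain ⟨d, hd, hcd⟩ := ih v c h'
    rcases le_or_gt (v a ⬝ᵥ d) 0 with hva | hva
    · refine ⟨d, ?_, hcd⟩
      intro i hi
      rcases Finset.mem_insert.mp hi with rfl | hi
      · exact hva
      · exact hd i hi
    · have hva0 : (v a ⬝ᵥ d) ≠ 0 := ne_of_gt hva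
      have h'' : ¬ ∃ z : ι → ℝ, (∀ i, 0 ≤ z i) ∧
          ((v a ⬝ᵥ d) • c - (c ⬝ᵥ d) • v a)
            = ∑ i ∈ s', z i • ((v a ⬝ᵥ d) • v i - (v i ⬝ᵥ d) • v a) := by
        rintro ⟨z, hz, hzc⟩
        have hsum1 : ∑ i ∈ s', z i • ((v a ⬝ᵥ d) • v i - (v i ⬝ᵥ d) • v a)
            = (v a ⬝ᵥ d) • (∑ i ∈ s', z i • v i)
              - (∑ i ∈ s', z i * (v i ⬝ᵥ d)) • v a := by
          simp only [smul_sub]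
          rw [Finset.sum_sub_distrib, Finset.smul_sum, Finset.sum_smul]
          congr 1
          · exact Finset.sum_congr rfl fun i _ => by rw [smul_comm]
          · exact Finset.sum_congr rfl fun i _ => by rw [smul_smul]
        have key0 : (v a ⬝ᵥ d) • c = (v a ⬝ᵥ d) • (∑ i ∈ s', z i • v i)
            + (c ⬝ᵥ d - ∑ i ∈ s', z i * (v i ⬝ᵥ d)) • v a := by
          have h2 := hzc.trans hsum1
          linear_combination (norm := module) h2
        have hμ0 : 0 ≤ (c ⬝ᵥ d - ∑ i ∈ s', z i * (v i ⬝ᵥ d)) / (v a ⬝ᵥ d) := by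
          apply div_nonneg _ hva.le
          have : ∑ i ∈ s', z i * (v i ⬝ᵥ d) ≤ 0 :=
            Finset.sum_nonpos fun i hi => mul_nonpos_of_nonneg_of_nonpos (hz i) (hd i hi)
          linarith
        apply h
        refine ⟨fun i => if i = a then (c ⬝ᵥ d - ∑ i ∈ s', z i * (v i ⬝ᵥ d)) / (v a ⬝ᵥ d)
          else if i ∈ s' then z i else 0, ?_, ?_⟩
        · intro i
          dsimp only
          split_ifs with h1 h2
          · exact hμ0
          · exact hz i
          · exact le_rfl
        · rw [Finset.sum_insert ha]
          dsimp only
          rw [if_pos rfl]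
          have hsum : ∑ i ∈ s', (if i = a then (c ⬝ᵥ d - ∑ i ∈ s', z i * (v i ⬝ᵥ d)) / (v a ⬝ᵥ d)
              else if i ∈ s' then z i else 0) • v i = ∑ i ∈ s', z i • v i := by
            refine Finset.sum_congr rfl fun i hi => ?_
            rw [if_neg (fun hia => ha (by rw [← hia]; exact hi)), if_pos hi]
          rw [hsum]
          apply smul_right_injective (Fin n → ℝ) hva0
          show (v a ⬝ᵥ d) • c = (v a ⬝ᵥ d) •
            (((c ⬝ᵥ d - ∑ i ∈ s', z i * (v i ⬝ᵥ d)) / (v a ⬝ᵥ d)) • v a + ∑ i ∈ s', z i • v i)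
          rw [smul_add, smul_smul, mul_div_cancel₀ _ hva0, key0, add_comm]
      obtain ⟨e, he, hce⟩ := ih (fun i => (v a ⬝ᵥ d) • v i - (v i ⬝ᵥ d) • v a)
        ((v a ⬝ᵥ d) • c - (c ⬝ᵥ d) • v a) h''
      refine ⟨(v a ⬝ᵥ d) • e - (v a ⬝ᵥ e) • d, ?_, ?_⟩
      · intro i hi
        rcases Finset.mem_insert.mp hi with rfl | hi
        · rw [dotProduct_sub, dotProduct_smul, dotProduct_smul]
          simp only [smul_eq_mul]
          nlinarith [mul_comm (v i ⬝ᵥ d) (v i ⬝ᵥ e)]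
        · have := he i hi
          simp only [sub_dotProduct, smul_dotProduct, smul_eq_mul] at this
          rw [dotProduct_sub, dotProduct_smul, dotProduct_smul]
          simp only [smul_eq_mul]
          linarith [this]
      · have := hce
        simp only [sub_dotProduct, smul_dotProduct, smul_eq_mul] at this
        rw [dotProduct_sub, dotProduct_smul, dotProduct_smul]
        simp only [smul_eq_mul]
        linarith [this]



variable {n : ℕ}

/-- Conic Carathéodory. -/
theorem cara {ι : Type*} [DecidableEq ι] [Fintype ι] (s : Finset ι) (v : ι → Fin n → ℝ) :
    ∀ (z : ι → ℝ), (∀ i, 0 ≤ z i) →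
    ∀ (c : Fin n → ℝ), c = ∑ i ∈ s, z i • v i →
    ∃ t ⊆ s, LinearIndependent ℝ (fun i : ↥(t : Set ι) => v i) ∧
      ∃ w : ι → ℝ, (∀ i, 0 ≤ w i) ∧ c = ∑ i ∈ t, w i • v i := by
  induction s using Finset.strongInductionOn with
  | _ s ihs =>
    intro z hz c hc
    by_cases hli : LinearIndependent ℝ (fun i : ↥(s : Set ι) => v i)
    · exact ⟨s, le_refl _, hli, z, hz, hc⟩
    · obtain ⟨g, hg0, i₁, hi₁⟩ := Fintype.not_linearIndependent_iff.mp hli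
      have hgex : ∃ gg : ι → ℝ, (∑ i ∈ s, gg i • v i = 0) ∧ ∃ i ∈ s, 0 < gg i := by
        have hsum : ∀ (g' : ↥(s : Set ι) → ℝ),
            ∑ i ∈ s, (fun j => if h : j ∈ s then g' ⟨j, h⟩ else 0) i • v i
              = ∑ i : ↥(s : Set ι), g' i • v i := by
          intro g'
          rw [← Finset.sum_coe_sort s (fun j => (fun j => if h : j ∈ s then g' ⟨j, h⟩ else 0) j • v j)]
          refine Finset.sum_congr rfl fun i _ => ?_
          have : (↑i : ι) ∈ s := i.2
          simp [this]
        by_cases hpos : ∃ i : ↥(s : Set ι), 0 < g i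
        · obtain ⟨i, hi⟩ := hpos
          refine ⟨fun j => if h : j ∈ s then g ⟨j, h⟩ else 0, by rw [hsum g, hg0], ⟨i, i.2, ?_⟩⟩
          have : (↑i : ι) ∈ s := i.2
          simpa [this] using hi
        · push_neg at hpos
          have hneg : 0 < -g i₁ := by
            rcases (hi₁.lt_or_gt) with h | h
            · linarith
            · exact absurd h (not_lt.mpr (hpos i₁))
          refine ⟨fun j => if h : j ∈ s then -g ⟨j, h⟩ else 0, ?_, ⟨i₁, i₁.2, ?_⟩⟩
          · have := hsum (fun i => -g i)
            simp only [neg_smul] at this ⊢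
            rw [this, Finset.sum_neg_distrib, hg0, neg_zero]
          · have : (↑i₁ : ι) ∈ s := i₁.2
            simpa [this] using hneg
      obtain ⟨gg, hgg0, iw, hiw, hiwpos⟩ := hgex
      have hQne : (s.filter (fun i => 0 < gg i)).Nonempty := ⟨iw, Finset.mem_filter.mpr ⟨hiw, hiwpos⟩⟩
      obtain ⟨i₀, hi₀Q, hmin⟩ := Finset.exists_min_image _ (fun i => z i / gg i) hQne
      have hi₀s : i₀ ∈ s := (Finset.mem_filter.mp hi₀Q).1
      have hgg₀ : 0 < gg i₀ := (Finset.mem_filter.mp hi₀Q).2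
      have hr0 : 0 ≤ z i₀ / gg i₀ := div_nonneg (hz i₀) hgg₀.le
      have hz'0 : ∀ i, 0 ≤ (fun i => if i ∈ s.erase i₀ then z i - (z i₀ / gg i₀) * gg i else 0) i := by
        intro i
        dsimp only
        split_ifs with hmem
        · have his : i ∈ s := Finset.mem_of_mem_erase hmem
          rcases le_or_gt (gg i) 0 with hgi | hgi
          · nlinarith [hz i]
          · have hiQ : i ∈ s.filter (fun i => 0 < gg i) := Finset.mem_filter.mpr ⟨his, hgi⟩
            have := hmin i hiQ
            rw [div_le_div_iff₀ hgg₀ hgi] at this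
            have h2 : z i₀ / gg i₀ * gg i ≤ z i := by
              rw [div_mul_eq_mul_div, div_le_iff₀ hgg₀]
              linarith
            linarith
        · exact le_rfl
      have hc' : c = ∑ i ∈ s.erase i₀,
          (fun i => if i ∈ s.erase i₀ then z i - (z i₀ / gg i₀) * gg i else 0) i • v i := by
        have e1 : ∑ i ∈ s.erase i₀,
            (fun i => if i ∈ s.erase i₀ then z i - (z i₀ / gg i₀) * gg i else 0) i • v i
            = ∑ i ∈ s.erase i₀, (z i - (z i₀ / gg i₀) * gg i) • v i := by
          refine Finset.sum_congr rfl fun i hi => ?_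
          simp [hi]
        have e2 : ∑ i ∈ s.erase i₀, (z i - (z i₀ / gg i₀) * gg i) • v i
            = ∑ i ∈ s, (z i - (z i₀ / gg i₀) * gg i) • v i := by
          apply Finset.sum_erase
          have : z i₀ - (z i₀ / gg i₀) * gg i₀ = 0 := by
            field_simp
            ring
          rw [this, zero_smul]
        have e3 : ∑ i ∈ s, (z i - (z i₀ / gg i₀) * gg i) • v i
            = (∑ i ∈ s, z i • v i) - (z i₀ / gg i₀) • ∑ i ∈ s, gg i • v i := by
          rw [Finset.smul_sum, ← Finset.sum_sub_distrib]
          refine Finset.sum_congr rfl fun i _ => ?_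
          rw [sub_smul, smul_smul]
        rw [e1, e2, e3, hgg0, smul_zero, sub_zero, hc]
      obtain ⟨t, hts, hli', w, hw0, hcw⟩ := ihs (s.erase i₀) (Finset.erase_ssubset hi₀s) _ hz'0 c hc'
      exact ⟨t, le_trans hts (Finset.erase_subset i₀ s), hli', w, hw0, hcw⟩

/-- A proper subspace admits a nonzero vector orthogonal (in the `dotProduct` sense)
to all its members. -/
lemma exists_orth {W : Submodule ℝ (Fin n → ℝ)} (hW : W ≠ ⊤) :
    ∃ d : Fin n → ℝ, d ≠ 0 ∧ ∀ w ∈ W, w ⬝ᵥ d = 0 := by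
  let L : EuclideanSpace ℝ (Fin n) ≃ₗ[ℝ] (Fin n → ℝ) :=
    (WithLp.linearEquiv 2 ℝ (Fin n → ℝ))
  let W' : Submodule ℝ (EuclideanSpace ℝ (Fin n)) := W.comap (L : EuclideanSpace ℝ (Fin n) →ₗ[ℝ] (Fin n → ℝ))
  have hW' : W' ≠ ⊤ := by
    intro h
    apply hW
    rw [eq_top_iff]
    intro x _
    have : L.symm x ∈ W' := h ▸ Submodule.mem_top
    simpa [W'] using this
  have horth : W'ᗮ ≠ ⊥ := by
    rw [ne_eq, Submodule.orthogonal_eq_bot_iff]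
    exact hW'
  obtain ⟨d', hd'W, hd'0⟩ := Submodule.exists_mem_ne_zero_of_ne_bot horth
  refine ⟨L d', by simpa using hd'0, ?_⟩
  intro w hw
  have hmem : L.symm w ∈ W' := by simpa [W'] using hw
  have := (Submodule.mem_orthogonal W' d').mp hd'W (L.symm w) hmem
  rw [PiLp.inner_apply] at this
  simpa [dotProduct, RCLike.inner_apply, conj_trivial, L, mul_comm] using this



lemma sum_dot {n : ℕ} {ι : Type*} (s : Finset ι) (f : ι → Fin n → ℝ) (x : Fin n → ℝ) :
    (∑ i ∈ s, f i) ⬝ᵥ x = ∑ i ∈ s, f i ⬝ᵥ x := by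
  simp only [dotProduct, Finset.sum_apply, Finset.sum_mul]
  exact Finset.sum_comm

variable {m n : ℕ} (A : Matrix (Fin m) (Fin n) ℚ) (b : Fin m → ℝ)

/-- The real rows of `A`. -/
def Row (A : Matrix (Fin m) (Fin n) ℚ) (i : Fin m) : Fin n → ℝ := fun j => (A i j : ℝ)

lemma mem_Pb_iff {x : Fin n → ℝ} : x ∈ Pb A b ↔ ∀ i, Row A i ⬝ᵥ x ≤ b i := Iff.rfl

lemma isUnit_det_real {N : Fin n → Fin m} (hN : IsBasisOf A N) :
    IsUnit ((A.submatrix N id).map ((↑) : ℚ → ℝ)).det := by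
  have h1 : ((A.submatrix N id).map ((↑) : ℚ → ℝ)).det
      = ((A.submatrix N id).det : ℝ) := by
    simpa using (RingHom.map_det (Rat.castHom ℝ) (A.submatrix N id)).symm
  rw [h1, isUnit_iff_ne_zero]
  exact_mod_cast hN.2.ne_zero

lemma FN_mulVec {N : Fin n → Fin m} (hN : IsBasisOf A N) :
    ((A.submatrix N id).map ((↑) : ℚ → ℝ)).mulVec (FN A N b) = fun k => b (N k) := by
  rw [FN, mulVec_mulVec, Matrix.mul_nonsing_inv _ (isUnit_det_real A hN), one_mulVec]

lemma FN_tight {N : Fin n → Fin m} (hN : IsBasisOf A N) (k : Fin n) :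
    Row A (N k) ⬝ᵥ FN A N b = b (N k) :=
  congrFun (FN_mulVec A b hN) k

lemma FN_eq {N : Fin n → Fin m} (hN : IsBasisOf A N) {x : Fin n → ℝ}
    (ht : ∀ k, Row A (N k) ⬝ᵥ x = b (N k)) : FN A N b = x := by
  have h1 : ((A.submatrix N id).map ((↑) : ℚ → ℝ)).mulVec x = fun k => b (N k) :=
    funext ht
  rw [FN, ← h1, mulVec_mulVec, Matrix.nonsing_inv_mul _ (isUnit_det_real A hN), one_mulVec]

lemma isBasisOf_of_li {N : Fin n → Fin m} (hinj : Function.Injective N)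
    (hli : LinearIndependent ℝ (fun k => Row A (N k))) : IsBasisOf A N := by
  refine ⟨hinj, ?_⟩
  rw [isUnit_iff_ne_zero]
  intro hdet
  have hdetr : ((A.submatrix N id).map ((↑) : ℚ → ℝ)).det = 0 := by
    have h1 : ((A.submatrix N id).map ((↑) : ℚ → ℝ)).det
        = ((A.submatrix N id).det : ℝ) := by
      simpa using (RingHom.map_det (Rat.castHom ℝ) (A.submatrix N id)).symm
    rw [h1, hdet]; simp
  obtain ⟨v, hv0, hv⟩ := Matrix.exists_vecMul_eq_zero_iff.mpr hdetr
  have : ∑ k, v k • Row A (N k) = 0 := by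
    funext j
    have := congrFun hv j
    simpa [Matrix.vecMul, dotProduct, Row, Finset.sum_apply] using this
  have := Fintype.linearIndependent_iff.mp hli v this
  exact hv0 (funext this)

lemma li_of_isBasisOf {N : Fin n → Fin m} (hN : IsBasisOf A N) :
    LinearIndependent ℝ (fun k => Row A (N k)) := by
  rw [Fintype.linearIndependent_iff]
  intro g hg
  by_contra hne
  push_neg at hne
  obtain ⟨k, hk⟩ := hne
  have hdet := (isUnit_det_real A hN).ne_zero
  apply hdet
  apply Matrix.exists_vecMul_eq_zero_iff.mp
  refine ⟨g, fun h0 => hk (congrFun h0 k), ?_⟩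
  funext j
  have := congrFun hg j
  simpa [Matrix.vecMul, dotProduct, Row, Finset.sum_apply] using this

lemma mem_posCone_iff {c : Fin n → ℝ} {N : Fin n → Fin m} :
    c ∈ posCone A N ↔ ∃ y : Fin n → ℝ, (∀ i, 0 ≤ y i) ∧ c = ∑ k, y k • Row A (N k) := by
  constructor
  · rintro ⟨y, hy, hc⟩
    refine ⟨y, hy, funext fun j => ?_⟩
    rw [hc j]
    simp [Row, Finset.sum_apply]
  · rintro ⟨y, hy, rfl⟩
    refine ⟨y, hy, fun j => ?_⟩
    simp [Row, Finset.sum_apply]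

lemma mem_negCone_iff {c : Fin n → ℝ} {N : Fin n → Fin m} :
    c ∈ negCone A N ↔ ∃ y : Fin n → ℝ, (∀ i, 0 ≤ y i) ∧ c = -∑ k, y k • Row A (N k) := by
  constructor
  · rintro ⟨y, hy, hc⟩
    refine ⟨y, hy, funext fun j => ?_⟩
    rw [hc j]
    simp [Row, Finset.sum_apply]
  · rintro ⟨y, hy, rfl⟩
    refine ⟨y, hy, fun j => ?_⟩
    simp [Row, Finset.sum_apply]

lemma neg_mem_posCone_iff {c : Fin n → ℝ} {N : Fin n → Fin m} :
    (-c) ∈ posCone A N ↔ c ∈ negCone A N := by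
  rw [mem_posCone_iff, mem_negCone_iff]
  constructor <;> rintro ⟨y, hy, h⟩ <;> exact ⟨y, hy, by rw [← neg_eq_iff_eq_neg] at *; simpa using h⟩

lemma isGreatest_posCone {N : Fin n → Fin m} {c : Fin n → ℝ} (hN : IsBasisOf A N)
    (hfeas : FN A N b ∈ Pb A b) (hc : c ∈ posCone A N) :
    IsGreatest ((fun x => c ⬝ᵥ x) '' Pb A b) (c ⬝ᵥ FN A N b) := by
  obtain ⟨y, hy, rfl⟩ := (mem_posCone_iff A).mp hc
  constructor
  · exact ⟨FN A N b, hfeas, rfl⟩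
  · rintro r ⟨x, hx, rfl⟩
    calc (∑ k, y k • Row A (N k)) ⬝ᵥ x = ∑ k, y k * (Row A (N k) ⬝ᵥ x) := by
          rw [sum_dot]
          exact Finset.sum_congr rfl fun k _ => by rw [smul_dotProduct, smul_eq_mul]
      _ ≤ ∑ k, y k * b (N k) :=
          Finset.sum_le_sum fun k _ => mul_le_mul_of_nonneg_left (hx (N k)) (hy k)
      _ = ∑ k, y k * (Row A (N k) ⬝ᵥ FN A N b) := by
          exact Finset.sum_congr rfl fun k _ => by rw [FN_tight A b hN k]
      _ = (∑ k, y k • Row A (N k)) ⬝ᵥ FN A N b := by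
          rw [sum_dot]
          exact Finset.sum_congr rfl fun k _ => by rw [smul_dotProduct, smul_eq_mul]

lemma isLeast_negCone {N : Fin n → Fin m} {c : Fin n → ℝ} (hN : IsBasisOf A N)
    (hfeas : FN A N b ∈ Pb A b) (hc : c ∈ negCone A N) :
    IsLeast ((fun x => c ⬝ᵥ x) '' Pb A b) (c ⬝ᵥ FN A N b) := by
  have hc' : (-c) ∈ posCone A N := (neg_mem_posCone_iff A).mpr hc
  have := isGreatest_posCone A b hN hfeas hc'
  constructor
  · exact ⟨FN A N b, hfeas, rfl⟩
  · rintro r ⟨x, hx, rfl⟩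
    have h1 : (-c) ⬝ᵥ x ≤ (-c) ⬝ᵥ FN A N b := this.2 ⟨x, hx, rfl⟩
    simp only [neg_dotProduct, neg_le_neg_iff] at h1
    exact h1


/-- Full column rank over `ℚ` gives real injectivity. -/
lemma mulVec_inj_real (hrank : A.rank = n) :
    ∀ d : Fin n → ℝ, (∀ i, Row A i ⬝ᵥ d = 0) → d = 0 := by
  have hq : ∀ v : Fin n → ℚ, A.mulVec v = 0 → v = 0 := by
    intro v hv
    have hker : LinearMap.ker A.mulVecLin = ⊥ := by
      have h1 := LinearMap.finrank_range_add_finrank_ker A.mulVecLin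
      have h2 : Module.finrank ℚ (Fin n → ℚ) = n := Module.finrank_fin_fun ℚ
      have h3 : Module.finrank ℚ (LinearMap.range A.mulVecLin) = n := hrank
      rw [h2, h3] at h1
      have h4 : Module.finrank ℚ (LinearMap.ker A.mulVecLin) = 0 := by omega
      exact Submodule.finrank_eq_zero.mp h4
    have hv' : v ∈ LinearMap.ker A.mulVecLin := by
      rw [LinearMap.mem_ker, Matrix.mulVecLin_apply, hv]
    rwa [hker, Submodule.mem_bot] at hv'
  have hG : (Aᵀ * A).det ≠ 0 := by
    intro h0
    obtain ⟨v, hv0, hv⟩ := Matrix.exists_mulVec_eq_zero_iff.mpr h0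
    have hAv : A.mulVec v = 0 := by
      have h1 : A.mulVec v ⬝ᵥ A.mulVec v = 0 := by
        rw [dotProduct_mulVec, ← Matrix.mulVec_transpose, mulVec_mulVec, hv, zero_dotProduct]
      exact dotProduct_self_eq_zero.mp h1
    exact hv0 (hq v hAv)
  intro d hd
  have hGr : ((Aᵀ * A).map ((↑) : ℚ → ℝ)).det ≠ 0 := by
    have h1 : ((Aᵀ * A).map ((↑) : ℚ → ℝ)).det = (((Aᵀ * A).det : ℚ) : ℝ) := by
      simpa using (RingHom.map_det (Rat.castHom ℝ) (Aᵀ * A)).symm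
    rw [h1]
    exact_mod_cast hG
  by_contra hd0
  apply hGr
  apply Matrix.exists_mulVec_eq_zero_iff.mp
  refine ⟨d, hd0, ?_⟩
  have hmap : (Aᵀ * A).map ((↑) : ℚ → ℝ) = (Aᵀ.map ((↑) : ℚ → ℝ)) * (A.map ((↑) : ℚ → ℝ)) := by
    simpa using Matrix.map_mul (L := Aᵀ) (M := A) (f := Rat.castHom ℝ)
  have hAd : (A.map ((↑) : ℚ → ℝ)).mulVec d = 0 := by
    funext i
    exact hd i
  rw [hmap, ← mulVec_mulVec, hAd, mulVec_zero]

/-- Extract an indexed basis from a spanning set of tight rows,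
containing a prescribed independent subfamily. -/
lemma exists_basis_index {T : Set (Fin m)}
    (hspan : Submodule.span ℝ (Row A '' T) = ⊤)
    {s : Finset (Fin m)} (hsT : ↑s ⊆ T)
    (hli : LinearIndependent ℝ (fun i : ↥(s : Set (Fin m)) => Row A i)) :
    ∃ N : Fin n → Fin m, Function.Injective N ∧ (∀ k, N k ∈ T) ∧
      LinearIndependent ℝ (fun k => Row A (N k)) ∧ ∀ i ∈ s, ∃ k, N k = i := by
  classical
  have hinjOn : Set.InjOn (Row A) ↑s := by
    intro i hi j hj hij
    have h2 : (⟨i, hi⟩ : ↥(s : Set (Fin m))) = ⟨j, hj⟩ := hli.injective hij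
    exact congrArg Subtype.val h2
  have hliset : LinearIndepOn ℝ id (Row A '' ↑s) :=
    LinearIndepOn.id_image (v := Row A) hli
  have hsub : Row A '' ↑s ⊆ Row A '' T := Set.image_mono hsT
  have hBsub : hliset.extend hsub ⊆ Row A '' T := hliset.extend_subset hsub
  have hsB : Row A '' ↑s ⊆ hliset.extend hsub := hliset.subset_extend hsub
  have hBli : LinearIndependent ℝ (fun x : ↥(hliset.extend hsub) => (x : Fin n → ℝ)) :=
    hliset.linearIndepOn_extend hsub
  have hBspan : Submodule.span ℝ (hliset.extend hsub) = ⊤ := by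
    rw [eq_top_iff, ← hspan]
    exact Submodule.span_le.mpr (hliset.subset_span_extend hsub)
  have hBfin : Finite ↥(hliset.extend hsub) := hBli.finite
  haveI : Fintype ↥(hliset.extend hsub) := Fintype.ofFinite _
  let hbasis : Module.Basis ↥(hliset.extend hsub) ℝ (Fin n → ℝ) :=
    Module.Basis.mk hBli (by rw [Subtype.range_coe, hBspan])
  have hcard : Fintype.card ↥(hliset.extend hsub) = n := by
    have h1 := Module.finrank_eq_card_basis hbasis
    rw [Module.finrank_fin_fun] at h1
    omega
  let e : Fin n ≃ ↥(hliset.extend hsub) := (Fintype.equivFinOfCardEq hcard).symm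
  have hchoice : ∀ w : ↥(hliset.extend hsub), ∃ i : Fin m,
      i ∈ T ∧ Row A i = ↑w ∧ ((↑w : Fin n → ℝ) ∈ Row A '' ↑s → i ∈ s) := by
    intro w
    by_cases hw : (↑w : Fin n → ℝ) ∈ Row A '' ↑s
    · obtain ⟨i, hi, hrow⟩ := hw
      exact ⟨i, hsT hi, hrow, fun _ => hi⟩
    · obtain ⟨i, hi, hrow⟩ := hBsub w.2
      exact ⟨i, hi, hrow, fun h => absurd h hw⟩
  choose idx hidxT hidxRow hidxs using hchoice
  have hrowk : ∀ k, Row A (idx (e k)) = ↑(e k) := fun k => hidxRow (e k)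
  refine ⟨fun k => idx (e k), ?_, fun k => hidxT _, ?_, ?_⟩
  · intro k k' hkk
    have h1 : Row A (idx (e k)) = Row A (idx (e k')) := congrArg (Row A) hkk
    rw [hrowk, hrowk] at h1
    exact e.injective (Subtype.val_injective h1)
  · have h1 : (fun k => Row A (idx (e k))) = fun k => ((e k : Fin n → ℝ)) :=
      funext hrowk
    rw [h1]
    exact hBli.comp e e.injective
  · intro i hi
    have hw : Row A i ∈ hliset.extend hsub := hsB ⟨i, hi, rfl⟩
    refine ⟨e.symm ⟨Row A i, hw⟩, ?_⟩
    have h2 : idx ⟨Row A i, hw⟩ ∈ s := hidxs ⟨Row A i, hw⟩ ⟨i, hi, rfl⟩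
    have h3 : Row A (idx ⟨Row A i, hw⟩) = Row A i := hidxRow ⟨Row A i, hw⟩
    have h4 := hinjOn h2 hi h3
    show idx (e (e.symm ⟨Row A i, hw⟩)) = i
    rw [Equiv.apply_symm_apply]
    exact h4

/-- The dot-with-`e` functional as a linear map. -/
def dotLin (e : Fin n → ℝ) : (Fin n → ℝ) →ₗ[ℝ] ℝ where
  toFun w := w ⬝ᵥ e
  map_add' u v := add_dotProduct u v e
  map_smul' r u := by simp [smul_dotProduct]

lemma descent (hA : ∀ d : Fin n → ℝ, (∀ i, Row A i ⬝ᵥ d = 0) → d = 0)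
    (c : Fin n → ℝ) (hbdd : BddAbove ((fun x => c ⬝ᵥ x) '' Pb A b)) :
    ∀ x ∈ Pb A b, ∃ N : Fin n → Fin m, IsBasisOf A N ∧ FN A N b ∈ Pb A b ∧
      c ⬝ᵥ x ≤ c ⬝ᵥ FN A N b := by
  classical
  have step : ∀ x, x ∈ Pb A b →
      Submodule.span ℝ (Row A '' {i | Row A i ⬝ᵥ x = b i}) ≠ ⊤ →
      ∃ x', x' ∈ Pb A b ∧ c ⬝ᵥ x ≤ c ⬝ᵥ x' ∧
        Module.finrank ℝ (Submodule.span ℝ (Row A '' {i | Row A i ⬝ᵥ x = b i})) <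
        Module.finrank ℝ (Submodule.span ℝ (Row A '' {i | Row A i ⬝ᵥ x' = b i})) := by
    intro x hx hne
    obtain ⟨d, hd0, hdo⟩ := exists_orth hne
    have htight : ∀ i, Row A i ⬝ᵥ x = b i → Row A i ⬝ᵥ d = 0 := fun i hi =>
      hdo _ (Submodule.subset_span ⟨i, hi, rfl⟩)
    have move : ∀ e : Fin n → ℝ, 0 ≤ c ⬝ᵥ e →
        (∀ i, Row A i ⬝ᵥ x = b i → Row A i ⬝ᵥ e = 0) →
        (∃ j, 0 < Row A j ⬝ᵥ e) →
        ∃ x', x' ∈ Pb A b ∧ c ⬝ᵥ x ≤ c ⬝ᵥ x' ∧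
          Module.finrank ℝ (Submodule.span ℝ (Row A '' {i | Row A i ⬝ᵥ x = b i})) <
          Module.finrank ℝ (Submodule.span ℝ (Row A '' {i | Row A i ⬝ᵥ x' = b i})) := by
      intro e hce he hej
      obtain ⟨j₀, hj₀, hjmin⟩ := Finset.exists_min_image
        (Finset.univ.filter (fun j => 0 < Row A j ⬝ᵥ e))
        (fun j => (b j - Row A j ⬝ᵥ x) / (Row A j ⬝ᵥ e))
        (by obtain ⟨j, hj⟩ := hej; exact ⟨j, by simp [hj]⟩)
      have hj₀e : 0 < Row A j₀ ⬝ᵥ e := (Finset.mem_filter.mp hj₀).2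
      have hxj₀ : Row A j₀ ⬝ᵥ x ≤ b j₀ := hx j₀
      have ht0 : 0 ≤ (b j₀ - Row A j₀ ⬝ᵥ x) / (Row A j₀ ⬝ᵥ e) :=
        div_nonneg (by linarith) hj₀e.le
      set t := (b j₀ - Row A j₀ ⬝ᵥ x) / (Row A j₀ ⬝ᵥ e) with hts
      have hsplit : ∀ i, Row A i ⬝ᵥ (x + t • e) = Row A i ⬝ᵥ x + t * (Row A i ⬝ᵥ e) := by
        intro i
        rw [dotProduct_add, dotProduct_smul, smul_eq_mul]
      have hfeas : x + t • e ∈ Pb A b := by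
        intro i
        show Row A i ⬝ᵥ (x + t • e) ≤ b i
        rw [hsplit i]
        have hxi : Row A i ⬝ᵥ x ≤ b i := hx i
        rcases le_or_gt (Row A i ⬝ᵥ e) 0 with hie | hie
        · have : t * (Row A i ⬝ᵥ e) ≤ 0 := mul_nonpos_of_nonneg_of_nonpos ht0 hie
          linarith
        · have hiJ : i ∈ Finset.univ.filter (fun j => 0 < Row A j ⬝ᵥ e) := by simp [hie]
          have hmin := hjmin i hiJ
          have h2 : t * (Row A i ⬝ᵥ e) ≤ b i - Row A i ⬝ᵥ x := by
            rw [← le_div_iff₀ hie]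
            exact hmin
          linarith
      have htsub : {i | Row A i ⬝ᵥ x = b i} ⊆ {i | Row A i ⬝ᵥ (x + t • e) = b i} := by
        intro i hi
        have : Row A i ⬝ᵥ e = 0 := he i hi
        simp only [Set.mem_setOf_eq] at hi ⊢
        rw [hsplit i, this, mul_zero, add_zero]
        exact hi
      have hj₀tight : Row A j₀ ⬝ᵥ (x + t • e) = b j₀ := by
        rw [hsplit j₀, hts, div_mul_cancel₀ _ (ne_of_gt hj₀e)]
        ring
      have hmono : Submodule.span ℝ (Row A '' {i | Row A i ⬝ᵥ x = b i}) ≤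
          Submodule.span ℝ (Row A '' {i | Row A i ⬝ᵥ (x + t • e) = b i}) :=
        Submodule.span_mono (Set.image_mono htsub)
      have hker : Submodule.span ℝ (Row A '' {i | Row A i ⬝ᵥ x = b i}) ≤
          LinearMap.ker (dotLin e) := by
        rw [Submodule.span_le]
        rintro w ⟨i, hi, rfl⟩
        simp only [SetLike.mem_coe, LinearMap.mem_ker]
        exact he i hi
      have hj₀old : Row A j₀ ∉ Submodule.span ℝ (Row A '' {i | Row A i ⬝ᵥ x = b i}) := by
        intro hmem
        have h1 : Row A j₀ ∈ LinearMap.ker (dotLin e) := hker hmem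
        rw [LinearMap.mem_ker] at h1
        have : Row A j₀ ⬝ᵥ e = 0 := h1
        linarith
      have hj₀new : Row A j₀ ∈ Submodule.span ℝ (Row A '' {i | Row A i ⬝ᵥ (x + t • e) = b i}) :=
        Submodule.subset_span ⟨j₀, hj₀tight, rfl⟩
      have hlt : Submodule.span ℝ (Row A '' {i | Row A i ⬝ᵥ x = b i}) <
          Submodule.span ℝ (Row A '' {i | Row A i ⬝ᵥ (x + t • e) = b i}) :=
        lt_of_le_of_ne hmono (fun heq => hj₀old (heq ▸ hj₀new))
      refine ⟨x + t • e, hfeas, ?_, Submodule.finrank_lt_finrank_of_lt hlt⟩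
      rw [dotProduct_add, dotProduct_smul, smul_eq_mul]
      nlinarith
    have core : ∀ e : Fin n → ℝ, e ≠ 0 →
        (∀ i, Row A i ⬝ᵥ x = b i → Row A i ⬝ᵥ e = 0) → 0 ≤ c ⬝ᵥ e →
        ∃ x', x' ∈ Pb A b ∧ c ⬝ᵥ x ≤ c ⬝ᵥ x' ∧
          Module.finrank ℝ (Submodule.span ℝ (Row A '' {i | Row A i ⬝ᵥ x = b i})) <
          Module.finrank ℝ (Submodule.span ℝ (Row A '' {i | Row A i ⬝ᵥ x' = b i})) := by
      intro e he0 hetight hce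
      by_cases hej : ∃ j, 0 < Row A j ⬝ᵥ e
      · exact move e hce hetight hej
      · push_neg at hej
        rcases eq_or_lt_of_le hce with hc0 | hcpos
        · by_cases hej' : ∃ j, 0 < Row A j ⬝ᵥ (-e)
          · refine move (-e) ?_ (fun i hi => by rw [dotProduct_neg, hetight i hi, neg_zero]) hej'
            rw [dotProduct_neg]
            linarith
          · push_neg at hej'
            exfalso
            apply he0
            apply hA
            intro i
            have h1 := hej i
            have h2 := hej' i
            rw [dotProduct_neg] at h2
            linarith
        · exfalso
          obtain ⟨Bd, hBd⟩ := hbdd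
          set t : ℝ := max 0 ((Bd - c ⬝ᵥ x) / (c ⬝ᵥ e) + 1) with htdef
          have ht0 : (0:ℝ) ≤ t := le_max_left _ _
          have hmem : x + t • e ∈ Pb A b := by
            intro i
            show Row A i ⬝ᵥ (x + t • e) ≤ b i
            rw [dotProduct_add, dotProduct_smul, smul_eq_mul]
            have h1 : t * (Row A i ⬝ᵥ e) ≤ 0 := mul_nonpos_of_nonneg_of_nonpos ht0 (hej i)
            have hxi : Row A i ⬝ᵥ x ≤ b i := hx i
            linarith
          have hle : c ⬝ᵥ (x + t • e) ≤ Bd := hBd ⟨_, hmem, rfl⟩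
          rw [dotProduct_add, dotProduct_smul, smul_eq_mul] at hle
          have htgt : (Bd - c ⬝ᵥ x) / (c ⬝ᵥ e) + 1 ≤ t := le_max_right _ _
          have h2 : ((Bd - c ⬝ᵥ x) / (c ⬝ᵥ e)) * (c ⬝ᵥ e) = Bd - c ⬝ᵥ x :=
            div_mul_cancel₀ _ (ne_of_gt hcpos)
          nlinarith
    rcases le_or_gt 0 (c ⬝ᵥ d) with h | h
    · exact core d hd0 htight h
    · refine core (-d) (neg_ne_zero.mpr hd0)
        (fun i hi => by rw [dotProduct_neg, htight i hi, neg_zero]) ?_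
      rw [dotProduct_neg]
      linarith
  have main : ∀ k : ℕ, ∀ x, x ∈ Pb A b →
      n - Module.finrank ℝ (Submodule.span ℝ (Row A '' {i | Row A i ⬝ᵥ x = b i})) ≤ k →
      ∃ x', x' ∈ Pb A b ∧ c ⬝ᵥ x ≤ c ⬝ᵥ x' ∧
        Submodule.span ℝ (Row A '' {i | Row A i ⬝ᵥ x' = b i}) = ⊤ := by
    intro k
    induction k with
    | zero =>
      intro x hx h0
      have hle := Submodule.finrank_le (Submodule.span ℝ (Row A '' {i | Row A i ⬝ᵥ x = b i}))
      rw [Module.finrank_fin_fun] at hle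
      have heq : Module.finrank ℝ (Submodule.span ℝ (Row A '' {i | Row A i ⬝ᵥ x = b i})) = n := by
        omega
      refine ⟨x, hx, le_rfl, ?_⟩
      apply Submodule.eq_top_of_finrank_eq
      rw [heq, Module.finrank_fin_fun]
    | succ k ih =>
      intro x hx hk
      by_cases htop : Submodule.span ℝ (Row A '' {i | Row A i ⬝ᵥ x = b i}) = ⊤
      · exact ⟨x, hx, le_rfl, htop⟩
      · obtain ⟨x', hx', hcx, hlt⟩ := step x hx htop
        have hle := Submodule.finrank_le (Submodule.span ℝ (Row A '' {i | Row A i ⬝ᵥ x' = b i}))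
        rw [Module.finrank_fin_fun] at hle
        obtain ⟨x'', hx'', hcx', hsp⟩ := ih x' hx' (by omega)
        exact ⟨x'', hx'', le_trans hcx hcx', hsp⟩
  intro x hx
  obtain ⟨x', hx', hcx, hspan⟩ := main n x hx (by omega)
  have hempty : LinearIndependent ℝ
      (fun i : ↥(((∅ : Finset (Fin m)) : Set (Fin m))) => Row A i) := by
    haveI : IsEmpty ↥(((∅ : Finset (Fin m)) : Set (Fin m))) := by
      simp only [Finset.coe_empty]
      exact Set.isEmpty_coe_sort.mpr rfl
    exact linearIndependent_empty_type
  obtain ⟨N, hNinj, hNT, hNli, -⟩ := exists_basis_index A hspan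
    (s := (∅ : Finset (Fin m))) (by simp) hempty
  have hNbasis : IsBasisOf A N := isBasisOf_of_li A hNinj hNli
  have hFN : FN A N b = x' := FN_eq A b hNbasis (fun k => hNT k)
  exact ⟨N, hNbasis, by rw [hFN]; exact hx', by rw [hFN]; exact hcx⟩

lemma exists_max_basis (hA : ∀ d : Fin n → ℝ, (∀ i, Row A i ⬝ᵥ d = 0) → d = 0)
    (c : Fin n → ℝ) (hbdd : BddAbove ((fun x => c ⬝ᵥ x) '' Pb A b))
    (hne : (Pb A b).Nonempty) :
    ∃ N, IsBasisOf A N ∧ FN A N b ∈ Pb A b ∧ c ∈ posCone A N ∧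
      IsGreatest ((fun x => c ⬝ᵥ x) '' Pb A b) (c ⬝ᵥ FN A N b) := by
  classical
  obtain ⟨x₀, hx₀⟩ := hne
  obtain ⟨N₀, hN₀, hN₀f, -⟩ := descent A b hA c hbdd x₀ hx₀
  set R : Finset (Fin n → Fin m) :=
    Finset.univ.filter (fun N => IsBasisOf A N ∧ FN A N b ∈ Pb A b) with hR
  have hRne : R.Nonempty := ⟨N₀, by simp [hR, hN₀, hN₀f]⟩
  obtain ⟨Nm, hNmR, hmax⟩ := Finset.exists_max_image R (fun N => c ⬝ᵥ FN A N b) hRne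
  have hNm : IsBasisOf A Nm ∧ FN A Nm b ∈ Pb A b := by simpa [hR] using hNmR
  have hGreat : IsGreatest ((fun x => c ⬝ᵥ x) '' Pb A b) (c ⬝ᵥ FN A Nm b) := by
    constructor
    · exact ⟨_, hNm.2, rfl⟩
    · rintro r ⟨x, hx, rfl⟩
      obtain ⟨N', hN', hN'f, hle⟩ := descent A b hA c hbdd x hx
      exact le_trans hle (hmax N' (by simp [hR, hN', hN'f]))
  have htightNm : ∀ k, Row A (Nm k) ⬝ᵥ FN A Nm b = b (Nm k) := FN_tight A b hNm.1
  have hspan : Submodule.span ℝ (Row A '' {i | Row A i ⬝ᵥ FN A Nm b = b i}) = ⊤ := by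
    rw [eq_top_iff]
    have h1 : Submodule.span ℝ (Set.range (fun k => Row A (Nm k))) = ⊤ :=
      (li_of_isBasisOf A hNm.1).span_eq_top_of_card_eq_finrank'
        (by rw [Fintype.card_fin, Module.finrank_fin_fun])
    rw [← h1]
    apply Submodule.span_mono
    rintro w ⟨k, rfl⟩
    exact ⟨Nm k, htightNm k, rfl⟩
  have hfeasNm : ∀ i, Row A i ⬝ᵥ FN A Nm b ≤ b i := fun i => hNm.2 i
  have hrep : ∃ y : Fin m → ℝ, (∀ i, 0 ≤ y i) ∧
      c = ∑ i ∈ Finset.univ.filter (fun i => Row A i ⬝ᵥ FN A Nm b = b i), y i • Row A i := by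
    by_contra hno
    obtain ⟨d, hd, hcd⟩ := farkas _ (Row A) c hno
    have hdt : ∀ i, Row A i ⬝ᵥ FN A Nm b = b i → Row A i ⬝ᵥ d ≤ 0 := fun i hi =>
      hd i (by simp [hi])
    by_cases hJ : (Finset.univ.filter (fun j => 0 < Row A j ⬝ᵥ d)).Nonempty
    · obtain ⟨j₁, hj₁, hjmin⟩ := Finset.exists_min_image _
        (fun j => (b j - Row A j ⬝ᵥ FN A Nm b) / (Row A j ⬝ᵥ d)) hJ
      have hj₁d : 0 < Row A j₁ ⬝ᵥ d := (Finset.mem_filter.mp hj₁).2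
      have hj₁slack : Row A j₁ ⬝ᵥ FN A Nm b < b j₁ := by
        rcases lt_or_eq_of_le (hfeasNm j₁) with h | h
        · exact h
        · exfalso
          have := hdt j₁ h
          linarith
      have hε0 : 0 < (b j₁ - Row A j₁ ⬝ᵥ FN A Nm b) / (Row A j₁ ⬝ᵥ d) :=
        div_pos (by linarith) hj₁d
      set ε := (b j₁ - Row A j₁ ⬝ᵥ FN A Nm b) / (Row A j₁ ⬝ᵥ d) with hεdef
      have hfeas : FN A Nm b + ε • d ∈ Pb A b := by
        intro i
        show Row A i ⬝ᵥ (FN A Nm b + ε • d) ≤ b i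
        rw [dotProduct_add, dotProduct_smul, smul_eq_mul]
        have hxi : Row A i ⬝ᵥ FN A Nm b ≤ b i := hfeasNm i
        rcases le_or_gt (Row A i ⬝ᵥ d) 0 with hie | hie
        · nlinarith
        · have hiJ : i ∈ Finset.univ.filter (fun j => 0 < Row A j ⬝ᵥ d) := by simp [hie]
          have hmin2 := hjmin i hiJ
          have h2 : ε * (Row A i ⬝ᵥ d) ≤ b i - Row A i ⬝ᵥ FN A Nm b := by
            rw [← le_div_iff₀ hie]
            exact hmin2
          linarith
      have hub : c ⬝ᵥ (FN A Nm b + ε • d) ≤ c ⬝ᵥ FN A Nm b := hGreat.2 ⟨_, hfeas, rfl⟩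
      rw [dotProduct_add, dotProduct_smul, smul_eq_mul] at hub
      nlinarith
    · rw [Finset.not_nonempty_iff_eq_empty] at hJ
      have hallnp : ∀ j, Row A j ⬝ᵥ d ≤ 0 := by
        intro j
        by_contra hpos
        push_neg at hpos
        have hjmem : j ∈ Finset.univ.filter (fun j => 0 < Row A j ⬝ᵥ d) := by simp [hpos]
        rw [hJ] at hjmem
        simp at hjmem
      obtain ⟨Bd, hBd⟩ := hbdd
      set t : ℝ := max 0 ((Bd - c ⬝ᵥ FN A Nm b) / (c ⬝ᵥ d) + 1) with htdef
      have ht0 : (0:ℝ) ≤ t := le_max_left _ _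
      have hmem : FN A Nm b + t • d ∈ Pb A b := by
        intro i
        show Row A i ⬝ᵥ (FN A Nm b + t • d) ≤ b i
        rw [dotProduct_add, dotProduct_smul, smul_eq_mul]
        have h1 : t * (Row A i ⬝ᵥ d) ≤ 0 := mul_nonpos_of_nonneg_of_nonpos ht0 (hallnp i)
        have hxi : Row A i ⬝ᵥ FN A Nm b ≤ b i := hfeasNm i
        linarith
      have hle : c ⬝ᵥ (FN A Nm b + t • d) ≤ Bd := hBd ⟨_, hmem, rfl⟩
      rw [dotProduct_add, dotProduct_smul, smul_eq_mul] at hle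
      have htgt : (Bd - c ⬝ᵥ FN A Nm b) / (c ⬝ᵥ d) + 1 ≤ t := le_max_right _ _
      have h2 : ((Bd - c ⬝ᵥ FN A Nm b) / (c ⬝ᵥ d)) * (c ⬝ᵥ d) = Bd - c ⬝ᵥ FN A Nm b :=
        div_mul_cancel₀ _ (ne_of_gt hcd)
      nlinarith
  obtain ⟨y, hy, hcy⟩ := hrep
  obtain ⟨tt, htt, httli, w, hw, hcw⟩ := cara _ (Row A) y hy c hcy
  have httT : ↑tt ⊆ {i | Row A i ⬝ᵥ FN A Nm b = b i} := by
    intro i hi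
    have h1 := htt hi
    simpa using h1
  obtain ⟨N, hNinj, hNT, hNli, hNs⟩ := exists_basis_index A hspan httT httli
  have hNbasis : IsBasisOf A N := isBasisOf_of_li A hNinj hNli
  have hFNx : FN A N b = FN A Nm b := FN_eq A b hNbasis (fun k => hNT k)
  refine ⟨N, hNbasis, by rw [hFNx]; exact hNm.2, ?_, by rw [hFNx]; exact hGreat⟩
  rw [mem_posCone_iff]
  refine ⟨fun k => if N k ∈ tt then w (N k) else 0, ?_, ?_⟩
  · intro k
    dsimp only
    split_ifs
    · exact hw _
    · exact le_rfl
  · rw [hcw]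
    have hsum : ∑ k, (if N k ∈ tt then w (N k) else 0) • Row A (N k)
        = ∑ k ∈ Finset.univ.filter (fun k => N k ∈ tt), w (N k) • Row A (N k) := by
      rw [Finset.sum_filter]
      refine Finset.sum_congr rfl fun k _ => ?_
      split_ifs with h
      · rfl
      · rw [zero_smul]
    have himg : (Finset.univ.filter (fun k => N k ∈ tt)).image N = tt := by
      ext i
      simp only [Finset.mem_image, Finset.mem_filter, Finset.mem_univ, true_and]
      constructor
      · rintro ⟨k, hk, rfl⟩
        exact hk
      · intro hi
        obtain ⟨k, hk⟩ := hNs i hi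
        exact ⟨k, by rw [hk]; exact hi, hk⟩
    calc ∑ i ∈ tt, w i • Row A i
        = ∑ i ∈ (Finset.univ.filter (fun k => N k ∈ tt)).image N, w i • Row A i := by
          rw [himg]
      _ = ∑ k ∈ Finset.univ.filter (fun k => N k ∈ tt), w (N k) • Row A (N k) :=
          Finset.sum_image (fun x _ y _ hxy => hNinj hxy)
      _ = ∑ k, (if N k ∈ tt then w (N k) else 0) • Row A (N k) := hsum.symm

lemma exists_min_basis (hA : ∀ d : Fin n → ℝ, (∀ i, Row A i ⬝ᵥ d = 0) → d = 0)
    (c : Fin n → ℝ) (hbddb : BddBelow ((fun x => c ⬝ᵥ x) '' Pb A b))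
    (hne : (Pb A b).Nonempty) :
    ∃ N, IsBasisOf A N ∧ FN A N b ∈ Pb A b ∧ c ∈ negCone A N ∧
      IsLeast ((fun x => c ⬝ᵥ x) '' Pb A b) (c ⬝ᵥ FN A N b) := by
  have hbdd : BddAbove ((fun x => (-c) ⬝ᵥ x) '' Pb A b) := by
    obtain ⟨Bd, hBd⟩ := hbddb
    refine ⟨-Bd, ?_⟩
    rintro r ⟨x, hx, rfl⟩
    have h1 : Bd ≤ c ⬝ᵥ x := hBd ⟨x, hx, rfl⟩
    show (-c) ⬝ᵥ x ≤ -Bd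
    rw [neg_dotProduct]
    simp only [neg_le_neg_iff]
    exact h1
  obtain ⟨N, h1, h2, h3, h4⟩ := exists_max_basis A b hA (-c) hbdd hne
  refine ⟨N, h1, h2, (neg_mem_posCone_iff A).mp h3, ?_, ?_⟩
  · exact ⟨_, h2, rfl⟩
  · rintro r ⟨x, hx, rfl⟩
    have h5 : (-c) ⬝ᵥ x ≤ (-c) ⬝ᵥ FN A N b := h4.2 ⟨x, hx, rfl⟩
    rw [neg_dotProduct, neg_dotProduct, neg_le_neg_iff] at h5
    exact h5

lemma image_eq (K : Set (Fin n → ℝ)) (c : Fin n → ℝ) :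
    (fun x : Fin n → ℝ => ((∑ i, c i * x i : ℝ) : EReal)) '' K
      = Real.toEReal '' ((fun x => c ⬝ᵥ x) '' K) := by
  rw [← Set.image_comp]
  rfl

lemma widthAlong_eq_coe {K : Set (Fin n → ℝ)} {c : Fin n → ℝ} {u v : ℝ}
    (hg : IsGreatest ((fun x => c ⬝ᵥ x) '' K) u)
    (hl : IsLeast ((fun x => c ⬝ᵥ x) '' K) v) :
    widthAlong K c = ((u - v : ℝ) : EReal) := by
  have hsup : sSup ((fun x : Fin n → ℝ => ((∑ i, c i * x i : ℝ) : EReal)) '' K)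
      = (u : EReal) := by
    have hgg : IsGreatest ((fun x : Fin n → ℝ => ((∑ i, c i * x i : ℝ) : EReal)) '' K)
        (u : EReal) := by
      rw [image_eq]
      constructor
      · exact ⟨u, hg.1, rfl⟩
      · rintro w ⟨r, hr, rfl⟩
        exact EReal.coe_le_coe_iff.mpr (hg.2 hr)
    exact hgg.csSup_eq
  have hinf : sInf ((fun x : Fin n → ℝ => ((∑ i, c i * x i : ℝ) : EReal)) '' K)
      = (v : EReal) := by
    have hll : IsLeast ((fun x : Fin n → ℝ => ((∑ i, c i * x i : ℝ) : EReal)) '' K)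
        (v : EReal) := by
      rw [image_eq]
      constructor
      · exact ⟨v, hl.1, rfl⟩
      · rintro w ⟨r, hr, rfl⟩
        exact EReal.coe_le_coe_iff.mpr (hl.2 hr)
    exact hll.csInf_eq
  rw [widthAlong, hsup, hinf, ← EReal.coe_sub]

lemma bdd_of_width_ne_top {K : Set (Fin n → ℝ)} (hK : K.Nonempty) {c : Fin n → ℝ}
    (h : widthAlong K c ≠ ⊤) :
    BddAbove ((fun x => c ⬝ᵥ x) '' K) ∧ BddBelow ((fun x => c ⬝ᵥ x) '' K) := by
  obtain ⟨x₀, hx₀⟩ := hK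
  have hr₀ : c ⬝ᵥ x₀ ∈ (fun x => c ⬝ᵥ x) '' K := ⟨x₀, hx₀, rfl⟩
  have hEq : widthAlong K c = sSup (Real.toEReal '' ((fun x => c ⬝ᵥ x) '' K))
      - sInf (Real.toEReal '' ((fun x => c ⬝ᵥ x) '' K)) := by
    rw [widthAlong, image_eq]
  have h1 : sInf (Real.toEReal '' ((fun x => c ⬝ᵥ x) '' K)) ≤ ((c ⬝ᵥ x₀ : ℝ) : EReal) :=
    sInf_le ⟨_, hr₀, rfl⟩
  have h2 : ((c ⬝ᵥ x₀ : ℝ) : EReal) ≤ sSup (Real.toEReal '' ((fun x => c ⬝ᵥ x) '' K)) :=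
    le_sSup ⟨_, hr₀, rfl⟩
  have hinf_ne_top : sInf (Real.toEReal '' ((fun x => c ⬝ᵥ x) '' K)) ≠ ⊤ :=
    ne_top_of_le_ne_top (EReal.coe_ne_top _) h1
  have hsup_ne_bot : sSup (Real.toEReal '' ((fun x => c ⬝ᵥ x) '' K)) ≠ ⊥ :=
    ne_bot_of_le_ne_bot (EReal.coe_ne_bot _) h2
  have hsup_ne_top : sSup (Real.toEReal '' ((fun x => c ⬝ᵥ x) '' K)) ≠ ⊤ := by
    intro htop
    apply h
    rw [hEq, htop, sub_eq_add_neg]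
    apply EReal.top_add_of_ne_bot
    simp only [ne_eq, EReal.neg_eq_bot_iff]
    exact hinf_ne_top
  have hinf_ne_bot : sInf (Real.toEReal '' ((fun x => c ⬝ᵥ x) '' K)) ≠ ⊥ := by
    intro hbot
    apply h
    rw [hEq, hbot]
    exact EReal.sub_bot hsup_ne_bot
  constructor
  · refine ⟨(sSup (Real.toEReal '' ((fun x => c ⬝ᵥ x) '' K))).toReal, ?_⟩
    intro s hs
    have hle : (s : EReal) ≤ sSup (Real.toEReal '' ((fun x => c ⬝ᵥ x) '' K)) :=
      le_sSup ⟨s, hs, rfl⟩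
    rwa [← EReal.coe_toReal hsup_ne_top hsup_ne_bot, EReal.coe_le_coe_iff] at hle
  · refine ⟨(sInf (Real.toEReal '' ((fun x => c ⬝ᵥ x) '' K))).toReal, ?_⟩
    intro s hs
    have hle : sInf (Real.toEReal '' ((fun x => c ⬝ᵥ x) '' K)) ≤ (s : EReal) :=
      sInf_le ⟨s, hs, rfl⟩
    rwa [← EReal.coe_toReal hinf_ne_top hinf_ne_bot, EReal.coe_le_coe_iff] at hle

end LWB

/-- If `P_b` is nonempty and has finite lattice width, then there are
bases `N₁, N₂` of `A` such that the lattice width of `P_b` equals the minimum of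
`c (F_{N₁} - F_{N₂}) b` over the nonzero integral vectors `c` of `C₁ ∩ C₂`, and for
every `c ∈ C₁ ∩ C₂` the maximum resp. minimum of `c·x` over `P_b` is `c F_{N₁} b`
resp. `c F_{N₂} b`. -/
theorem lattice_width_via_bases {m n : ℕ} (A : Matrix (Fin m) (Fin n) ℚ)
    (hrank : A.rank = n) (b : Fin m → ℝ) (hne : (Pb A b).Nonempty)
    (hfin : latticeWidth (Pb A b) ≠ ⊤) :
    ∃ N₁ N₂ : Fin n → Fin m, IsBasisOf A N₁ ∧ IsBasisOf A N₂ ∧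
      latticeWidth (Pb A b) =
        sInf {w : EReal | ∃ c : Fin n → ℤ, c ≠ 0 ∧
          (fun i => (c i : ℝ)) ∈ posCone A N₁ ∩ negCone A N₂ ∧
          w = ((∑ i, (c i : ℝ) * (FN A N₁ b i - FN A N₂ b i) : ℝ) : EReal)} ∧
      ∀ c ∈ posCone A N₁ ∩ negCone A N₂,
        IsGreatest {r : ℝ | ∃ x ∈ Pb A b, r = ∑ i, c i * x i}
          (∑ i, c i * FN A N₁ b i) ∧
        IsLeast {r : ℝ | ∃ x ∈ Pb A b, r = ∑ i, c i * x i}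
          (∑ i, c i * FN A N₂ b i) := by
  classical
  have hA := LWB.mulVec_inj_real A hrank
  have hsetformat : ∀ c : Fin n → ℝ,
      {r : ℝ | ∃ x ∈ Pb A b, r = ∑ i, c i * x i} = (fun x => c ⬝ᵥ x) '' Pb A b := by
    intro c
    ext r
    constructor
    · rintro ⟨x, hx, rfl⟩
      exact ⟨x, hx, rfl⟩
    · rintro ⟨x, hx, rfl⟩
      exact ⟨x, hx, rfl⟩
  set Props : Set ((Fin n → Fin m) × (Fin n → Fin m)) :=
    {p | IsBasisOf A p.1 ∧ IsBasisOf A p.2 ∧ FN A p.1 b ∈ Pb A b ∧ FN A p.2 b ∈ Pb A b}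
    with hProps
  set S : (Fin n → Fin m) × (Fin n → Fin m) → Set EReal := fun p =>
    {w : EReal | ∃ c : Fin n → ℤ, c ≠ 0 ∧
      (fun i => (c i : ℝ)) ∈ posCone A p.1 ∩ negCone A p.2 ∧
      w = ((∑ i, (c i : ℝ) * (FN A p.1 b i - FN A p.2 b i) : ℝ) : EReal)} with hS
  have hval : ∀ p ∈ Props, ∀ c : Fin n → ℝ, c ∈ posCone A p.1 ∩ negCone A p.2 →
      IsGreatest ((fun x => c ⬝ᵥ x) '' Pb A b) (c ⬝ᵥ FN A p.1 b) ∧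
      IsLeast ((fun x => c ⬝ᵥ x) '' Pb A b) (c ⬝ᵥ FN A p.2 b) := by
    rintro p ⟨hb1, hb2, hf1, hf2⟩ c ⟨hc1, hc2⟩
    exact ⟨LWB.isGreatest_posCone A b hb1 hf1 hc1, LWB.isLeast_negCone A b hb2 hf2 hc2⟩
  have hwidthval : ∀ p ∈ Props, ∀ c : Fin n → ℝ, c ∈ posCone A p.1 ∩ negCone A p.2 →
      widthAlong (Pb A b) c
        = ((∑ i, c i * (FN A p.1 b i - FN A p.2 b i) : ℝ) : EReal) := by
    intro p hp c hc
    obtain ⟨hg, hl⟩ := hval p hp c hc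
    rw [LWB.widthAlong_eq_coe hg hl]
    congr 1
    simp only [dotProduct, mul_sub, Finset.sum_sub_distrib]
  have claim1 : ∀ p ∈ Props, latticeWidth (Pb A b) ≤ sInf (S p) := by
    intro p hp
    apply le_sInf
    rintro w ⟨c, hc0, hcc, rfl⟩
    have h1 : latticeWidth (Pb A b) ≤ widthAlong (Pb A b) (fun i => (c i : ℝ)) :=
      sInf_le ⟨c, hc0, rfl⟩
    rwa [hwidthval p hp _ hcc] at h1
  have claim2 : ∀ c : Fin n → ℤ, c ≠ 0 →
      widthAlong (Pb A b) (fun i => (c i : ℝ)) ≠ ⊤ →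
      ∃ p ∈ Props, widthAlong (Pb A b) (fun i => (c i : ℝ)) ∈ S p := by
    intro c hc0 hwt
    obtain ⟨hba, hbb⟩ := LWB.bdd_of_width_ne_top hne hwt
    obtain ⟨N₁, hN₁, hf₁, hc₁, hg₁⟩ := LWB.exists_max_basis A b hA _ hba hne
    obtain ⟨N₂, hN₂, hf₂, hc₂, hl₂⟩ := LWB.exists_min_basis A b hA _ hbb hne
    refine ⟨(N₁, N₂), ⟨hN₁, hN₂, hf₁, hf₂⟩, c, hc0, ⟨hc₁, hc₂⟩, ?_⟩
    exact hwidthval (N₁, N₂) ⟨hN₁, hN₂, hf₁, hf₂⟩ _ ⟨hc₁, hc₂⟩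
  have hPropsne : Props.Nonempty := by
    by_contra hemp
    apply hfin
    rw [latticeWidth, sInf_eq_top]
    rintro w ⟨c, hc0, rfl⟩
    by_contra hwt
    obtain ⟨p, hp, -⟩ := claim2 c hc0 hwt
    exact hemp ⟨p, hp⟩
  have hfinvals : ({e : EReal | ∃ p ∈ Props, e = sInf (S p)}).Finite := by
    have himg : {e : EReal | ∃ p ∈ Props, e = sInf (S p)}
        = (fun p => sInf (S p)) '' Props := by
      ext e
      simp only [Set.mem_setOf_eq, Set.mem_image]
      constructor
      · rintro ⟨p, hp, rfl⟩
        exact ⟨p, hp, rfl⟩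
      · rintro ⟨p, hp, rfl⟩
        exact ⟨p, hp, rfl⟩
    rw [himg]
    exact (Set.toFinite Props).image _
  have hvalsne : ({e : EReal | ∃ p ∈ Props, e = sInf (S p)}).Nonempty := by
    obtain ⟨p, hp⟩ := hPropsne
    exact ⟨_, p, hp, rfl⟩
  obtain ⟨p₀, hp₀, hp₀min⟩ : ∃ p₀ ∈ Props, ∀ p ∈ Props, sInf (S p₀) ≤ sInf (S p) := by
    obtain ⟨p₀, hp₀, he⟩ := hvalsne.csInf_mem hfinvals
    refine ⟨p₀, hp₀, fun p hp => ?_⟩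
    rw [← he]
    exact csInf_le hfinvals.bddBelow ⟨p, hp, rfl⟩
  have hge : sInf (S p₀) ≤ latticeWidth (Pb A b) := by
    rw [latticeWidth]
    apply le_sInf
    rintro w ⟨c, hc0, rfl⟩
    by_cases hwt : widthAlong (Pb A b) (fun i => (c i : ℝ)) = ⊤
    · rw [hwt]
      exact le_top
    · obtain ⟨p, hp, hw⟩ := claim2 c hc0 hwt
      exact le_trans (hp₀min p hp) (sInf_le hw)
  have heq : latticeWidth (Pb A b) = sInf (S p₀) := le_antisymm (claim1 p₀ hp₀) hge
  refine ⟨p₀.1, p₀.2, hp₀.1, hp₀.2.1, heq, ?_⟩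
  intro c hc
  obtain ⟨hg, hl⟩ := hval p₀ hp₀ c hc
  constructor
  · rw [hsetformat c]
    exact hg
  · rw [hsetformat c]
    exact hl
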